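/- In the Artin braid group B_4, with Ω = σ2 σ3 σ1^{−1} σ2^{−1}, the identity Ω^2 · [σ2 Ω^{−1} σ2^{−1}, σ2 σ3^2 σ2^{−1}] = 1 holds, where [a,b] = a b a^{−1} b^{−1}. -/

import Mathlib

/-- Defining relations of the Artin braid group with `m` generators
(braid group on `m+1` strands): the braid and the commuting relations. -/
def braidRels (m : ℕ) : Set (FreeGroup (Fin m)) :=
  { r | (∃ i j : Fin m, (i : ℕ) + 1 = (j : ℕ) ∧
          r = FreeGroup.of i * FreeGroup.of j * FreeGroup.of i *
              (FreeGroup.of j)⁻¹ * (FreeGroup.of i)⁻¹ * (FreeGroup.of j)⁻¹) ∨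
        (∃ i j : Fin m, (i : ℕ) + 2 ≤ (j : ℕ) ∧
          r = FreeGroup.of i * FreeGroup.of j * (FreeGroup.of i)⁻¹ * (FreeGroup.of j)⁻¹) }

/-- The Artin braid group with `m` generators σ₁,…,σ_m (on `m+1` strands). -/
abbrev Braid (m : ℕ) : Type := PresentedGroup (braidRels m)

/-- The generator σ_{i+1} (0-based index `i`). -/
def sigmaB {m : ℕ} (i : Fin m) : Braid m := PresentedGroup.of i

/-- The generator with 0-based natural-number index (junk value `1` out of range). -/
def sigma' {m : ℕ} (k : ℕ) : Braid m := if h : k < m then sigmaB ⟨k, h⟩ else 1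

/-- The Garside half-twist Δ = (σ₁⋯σ_m)(σ₁⋯σ_{m-1})⋯(σ₁σ₂)(σ₁). -/
def garside (m : ℕ) : Braid m :=
  (((List.range m).reverse).map
    (fun n => ((List.range (n + 1)).map (fun t => (sigma' t : Braid m))).prod)).prod

/-- The pure braid generator A_{i,j} = σ_{j-1}⋯σ_{i+1} σ_i² σ_{i+1}⁻¹⋯σ_{j-1}⁻¹
(1-based strand indices `i < j`). -/
def Abr {m : ℕ} (i j : ℕ) : Braid m :=
  (((List.range' i (j - 1 - i)).reverse.map (fun t => (sigma' t : Braid m))).prod) *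
    ((sigma' (i - 1) : Braid m)) ^ 2 *
    (((List.range' i (j - 1 - i)).reverse.map (fun t => (sigma' t : Braid m))).prod)⁻¹

/-- The braid Ω = σ₂σ₃σ₁⁻¹σ₂⁻¹ in B₄. -/
def OmegaB : Braid 3 := sigma' 1 * sigma' 2 * (sigma' 0)⁻¹ * (sigma' 1)⁻¹

lemma rel_one {m : ℕ} {r : FreeGroup (Fin m)} (h : r ∈ braidRels m) :
    PresentedGroup.mk (braidRels m) r = 1 :=
  (QuotientGroup.eq_one_iff r).mpr (Subgroup.subset_normalClosure h)

lemma mk_of {m : ℕ} (k : Fin m) :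
    PresentedGroup.mk (braidRels m) (FreeGroup.of k) = sigmaB k := rfl

lemma braid_adj {m : ℕ} (i j : Fin m) (h : (i : ℕ) + 1 = j) :
    sigmaB i * sigmaB j * sigmaB i = sigmaB j * sigmaB i * sigmaB j := by
  have h1 : PresentedGroup.mk (braidRels m)
      (FreeGroup.of i * FreeGroup.of j * FreeGroup.of i *
        (FreeGroup.of j)⁻¹ * (FreeGroup.of i)⁻¹ * (FreeGroup.of j)⁻¹) = 1 :=
    rel_one (Or.inl ⟨i, j, h, rfl⟩)
  simp only [map_mul, map_inv, mk_of] at h1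
  have h2 : sigmaB i * sigmaB j * sigmaB i *
      ((sigmaB j * sigmaB i * sigmaB j)⁻¹) = 1 := by
    rw [← h1]; group
  rw [mul_inv_eq_one] at h2
  exact h2

lemma braid_comm {m : ℕ} (i j : Fin m) (h : (i : ℕ) + 2 ≤ j) :
    sigmaB i * sigmaB j = sigmaB j * sigmaB i := by
  have h1 : PresentedGroup.mk (braidRels m)
      (FreeGroup.of i * FreeGroup.of j * (FreeGroup.of i)⁻¹ * (FreeGroup.of j)⁻¹) = 1 :=
    rel_one (Or.inr ⟨i, j, h, rfl⟩)
  simp only [map_mul, map_inv, mk_of] at h1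
  have h2 : sigmaB i * sigmaB j * ((sigmaB j * sigmaB i)⁻¹) = 1 := by
    rw [← h1]; group
  rw [mul_inv_eq_one] at h2
  exact h2

open scoped commutatorElement

/-- In B₄, Ω² · [σ₂ Ω⁻¹ σ₂⁻¹, σ₂ σ₃² σ₂⁻¹] = 1. -/
theorem stmt3 :
    OmegaB ^ 2 *
      ⁅sigma' 1 * OmegaB⁻¹ * (sigma' 1)⁻¹, sigma' 1 * (sigma' 2 : Braid 3) ^ 2 * (sigma' 1)⁻¹⁆ =
      (1 : Braid 3) := by
  set x : Braid 3 := sigma' 0 with hx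
  set y : Braid 3 := sigma' 1 with hy
  set z : Braid 3 := sigma' 2 with hz
  have hxy : x * y * x = y * x * y := by
    rw [hx, hy]; simp only [sigma']; norm_num
    exact braid_adj ⟨0, by norm_num⟩ ⟨1, by norm_num⟩ rfl
  have hyz : y * z * y = z * y * z := by
    rw [hy, hz]; simp only [sigma']; norm_num
    exact braid_adj ⟨1, by norm_num⟩ ⟨2, by norm_num⟩ rfl
  have hxz : x * z = z * x := by
    rw [hx, hz]; simp only [sigma']; norm_num
    exact braid_comm ⟨0, by norm_num⟩ ⟨2, by norm_num⟩ (by norm_num)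
  have h1 : y * z = z⁻¹ * (y * z * y) := by rw [hyz]; group
  have h2 : z⁻¹ * y⁻¹ * z * y * z = y := by
    have e : z * y * z = y * z * y := hyz.symm
    calc z⁻¹ * y⁻¹ * z * y * z = z⁻¹ * y⁻¹ * (z * y * z) := by group
      _ = z⁻¹ * y⁻¹ * (y * z * y) := by rw [e]
      _ = y := by group
  have h3 : x * y = y⁻¹ * (x * y * x) := by rw [hxy]; group
  have h4 : x = z⁻¹ * (x * z) := by rw [hxz]; group
  have m1 : ∀ A B : Braid 3, A * (y * z) * B = A * (z⁻¹ * (y * z * y)) * B := by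
    intro A B; conv_lhs => rw [h1]
  have m2 : ∀ A B : Braid 3, A * (z⁻¹ * y⁻¹ * z * y * z) * B = A * y * B := by
    intro A B; rw [h2]
  have m3 : ∀ A B : Braid 3, A * (x * y) * B = A * (y⁻¹ * (x * y * x)) * B := by
    intro A B; conv_lhs => rw [h3]
  have m4 : ∀ A B : Braid 3, A * x * B = A * (z⁻¹ * (x * z)) * B := by
    intro A B; conv_lhs => rw [h4]
  have hΩ : OmegaB = y * z * x⁻¹ * y⁻¹ := rfl
  rw [hΩ, commutatorElement_def]
  calc (y * z * x⁻¹ * y⁻¹) ^ 2 *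
        (y * (y * z * x⁻¹ * y⁻¹)⁻¹ * y⁻¹ * (y * z ^ 2 * y⁻¹) *
          (y * (y * z * x⁻¹ * y⁻¹)⁻¹ * y⁻¹)⁻¹ * (y * z ^ 2 * y⁻¹)⁻¹)
      = (y * z * x⁻¹ * z * x⁻¹ * y * x * z⁻¹ * y⁻¹ * z * z) * (y * z) *
          (x⁻¹ * y⁻¹ * z⁻¹ * z⁻¹ * y⁻¹) := by simp only [pow_two]; group
    _ = (y * z * x⁻¹ * z * x⁻¹ * y * x * z⁻¹ * y⁻¹ * z * z) * (z⁻¹ * (y * z * y)) *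
          (x⁻¹ * y⁻¹ * z⁻¹ * z⁻¹ * y⁻¹) := m1 _ _
    _ = (y * z * x⁻¹ * z * x⁻¹ * y * x) * (z⁻¹ * y⁻¹ * z * y * z) *
          (y * x⁻¹ * y⁻¹ * z⁻¹ * z⁻¹ * y⁻¹) := by group
    _ = (y * z * x⁻¹ * z * x⁻¹ * y * x) * y *
          (y * x⁻¹ * y⁻¹ * z⁻¹ * z⁻¹ * y⁻¹) := m2 _ _
    _ = (y * z * x⁻¹ * z * x⁻¹ * y) * (x * y) *
          (y * x⁻¹ * y⁻¹ * z⁻¹ * z⁻¹ * y⁻¹) := by group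
    _ = (y * z * x⁻¹ * z * x⁻¹ * y) * (y⁻¹ * (x * y * x)) *
          (y * x⁻¹ * y⁻¹ * z⁻¹ * z⁻¹ * y⁻¹) := m3 _ _
    _ = (y * z * x⁻¹ * z * y) * (x * y) * (x⁻¹ * y⁻¹ * z⁻¹ * z⁻¹ * y⁻¹) := by group
    _ = (y * z * x⁻¹ * z * y) * (y⁻¹ * (x * y * x)) *
          (x⁻¹ * y⁻¹ * z⁻¹ * z⁻¹ * y⁻¹) := m3 _ _
    _ = (y * z * x⁻¹ * z) * x * (z⁻¹ * z⁻¹ * y⁻¹) := by group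
    _ = (y * z * x⁻¹ * z) * (z⁻¹ * (x * z)) * (z⁻¹ * z⁻¹ * y⁻¹) := m4 _ _
    _ = 1 := by group
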